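/- arXiv:1207.3976 — 4 statements merged into one kernel-verified Lean document; each statement's English description precedes it below -/
import Mathlib

section
/- Let α > 1 and let e have weight w(e) ∈ [α^i, α^{i+1}). If two edges e₁*, e₂* have weights in [α^i, α^{i+1}) and finitely many other edges have, for each level j < i, at most two edges with weight in [α^j, α^{j+1}), then the total weight of all these edges is strictly less than w(e)·(2α/(α−1) + 2α). -/
lemma geom_bound (α : ℝ) (hα : 1 < α) (L : ℤ) :
    ∀ n : ℕ, (α - 1) * ∑ j ∈ Finset.Icc L (L + n - 1), α ^ (j + 1) < α ^ (L + n + 1) := by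
  have hα0 : (0:ℝ) < α := by linarith
  have hα0' : α ≠ 0 := ne_of_gt hα0
  intro n
  induction n with
  | zero =>
    have : Finset.Icc L (L + (0:ℕ) - 1) = ∅ := Finset.Icc_eq_empty (by omega)
    rw [this]
    simpa using zpow_pos hα0 (L + (0:ℕ) + 1)
  | succ n ih =>
    have hset : Finset.Icc L (L + (n+1:ℕ) - 1) = insert (L + n) (Finset.Icc L (L + n - 1)) := by
      ext j
      simp only [Finset.mem_Icc, Finset.mem_insert]
      omega
    have hnot : (L + (n:ℤ)) ∉ Finset.Icc L (L + n - 1) := by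
      simp [Finset.mem_Icc]
    rw [hset, Finset.sum_insert hnot]
    have key : α ^ (L + (n:ℕ) + 1 + 1) = α ^ (L + (n:ℕ) + 1) + (α - 1) * α ^ (L + (n:ℤ) + 1) := by
      rw [show L + ((n:ℕ):ℤ) + 1 + 1 = (L + (n:ℕ) + 1) + 1 by ring, zpow_add₀ hα0' _ 1,
        zpow_one]
      ring
    have : (L + (n+1:ℕ) : ℤ) + 1 = L + (n:ℕ) + 1 + 1 := by push_cast; ring
    rw [this, key]
    nlinarith [zpow_pos hα0 (L + (n:ℤ) + 1)]

/-- A collection of mapped edges, indexed by a finite type, each with an integer level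
between `L` and `i`, at most two edges per level, and weights within the level's range. -/
theorem stmt_2 (α : ℝ) (hα : 1 < α) (i L : ℤ) (w : ℝ)
    (hw : α ^ i ≤ w ∧ w < α ^ (i + 1))
    (ι : Type*) [Fintype ι] (ws : ι → ℝ) (lvl : ι → ℤ)
    (hlvl : ∀ s : ι, L ≤ lvl s ∧ lvl s ≤ i)
    (hcount : ∀ j : ℤ, {s : ι | lvl s = j}.ncard ≤ 2)
    (hws : ∀ s : ι, α ^ (lvl s) ≤ ws s ∧ ws s < α ^ (lvl s + 1)) :
    ∑ s : ι, ws s < w * (2 * α / (α - 1) + 2 * α) := by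
  have hα0 : (0:ℝ) < α := by linarith
  have hα0' : α ≠ 0 := ne_of_gt hα0
  have hα1 : (0:ℝ) < α - 1 := by linarith
  have hwpos : 0 < w := lt_of_lt_of_le (zpow_pos hα0 i) hw.1
  -- Step A
  have stepA : ∑ s : ι, ws s ≤ ∑ s : ι, α ^ (lvl s + 1) :=
    Finset.sum_le_sum fun s _ => (hws s).2.le
  -- Step B: group by level
  have hmaps : ∀ s ∈ (Finset.univ : Finset ι), lvl s ∈ Finset.Icc L i := by
    intro s _
    simp [Finset.mem_Icc, (hlvl s).1, (hlvl s).2]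
  have hfiber := Finset.sum_fiberwise_of_maps_to hmaps (fun s => α ^ (lvl s + 1))
  have stepB : ∑ s : ι, α ^ (lvl s + 1) ≤ ∑ j ∈ Finset.Icc L i, 2 * α ^ (j + 1) := by
    rw [← hfiber]
    refine Finset.sum_le_sum fun j _ => ?_
    have hcard : (Finset.univ.filter fun s => lvl s = j).card ≤ 2 := by
      have := hcount j
      rwa [Set.ncard_eq_toFinset_card', Set.toFinset_setOf] at this
    calc ∑ s ∈ Finset.univ.filter (fun s => lvl s = j), α ^ (lvl s + 1)
        = ∑ s ∈ Finset.univ.filter (fun s => lvl s = j), α ^ (j + 1) := by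
          refine Finset.sum_congr rfl fun s hs => ?_
          rw [Finset.mem_filter] at hs
          rw [hs.2]
      _ = (Finset.univ.filter fun s => lvl s = j).card • α ^ (j + 1) := by
          rw [Finset.sum_const]
      _ ≤ 2 * α ^ (j + 1) := by
          rw [nsmul_eq_mul]
          have := zpow_pos hα0 (j + 1)
          have h2 : ((Finset.univ.filter fun s => lvl s = j).card : ℝ) ≤ 2 := by
            exact_mod_cast hcard
          nlinarith
  -- Step C
  by_cases hLi : L ≤ i
  · set n := (i + 1 - L).toNat with hn
    have hni : L + (n:ℤ) - 1 = i := by omega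
    have hgeom := geom_bound α hα L n
    rw [hni] at hgeom
    have hiexp : (L + (n:ℤ) + 1) = i + 2 := by omega
    rw [hiexp] at hgeom
    -- hgeom : (α-1) * ∑ j ∈ Icc L i, α^(j+1) < α^(i+2)
    have hS : ∑ j ∈ Finset.Icc L i, 2 * α ^ (j + 1) < 2 * α ^ (i + 2) / (α - 1) := by
      rw [← Finset.mul_sum, lt_div_iff₀ hα1]
      nlinarith [hgeom]
    have hEq : 2 * α ^ (i + 2) / (α - 1) = α ^ i * (2 * α / (α - 1) + 2 * α) := by
      have h2 : α ^ (i + 2) = α ^ i * α * α := by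
        rw [show i + 2 = i + 1 + 1 by ring, zpow_add₀ hα0' _ 1, zpow_add₀ hα0' i 1, zpow_one]
      rw [h2]
      field_simp
      ring
    have hfin : α ^ i * (2 * α / (α - 1) + 2 * α) ≤ w * (2 * α / (α - 1) + 2 * α) := by
      have hpos : 0 < 2 * α / (α - 1) + 2 * α := by positivity
      nlinarith [hw.1]
    calc ∑ s : ι, ws s ≤ ∑ j ∈ Finset.Icc L i, 2 * α ^ (j + 1) := stepA.trans stepB
      _ < 2 * α ^ (i + 2) / (α - 1) := hS
      _ = α ^ i * (2 * α / (α - 1) + 2 * α) := hEq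
      _ ≤ w * (2 * α / (α - 1) + 2 * α) := hfin
  · -- ι is empty
    have hempty : IsEmpty ι := by
      by_contra h
      rw [not_isEmpty_iff] at h
      obtain ⟨s⟩ := h
      exact hLi ((hlvl s).1.trans (hlvl s).2)
    rw [Finset.univ_eq_empty, Finset.sum_empty]
    have hpos : 0 < 2 * α / (α - 1) + 2 * α := by positivity
    positivity
end

section
/- If M is a maximal matching in a weighted graph G all of whose edge weights lie in [α^i, α^{i+1}) for some α > 1 and integer i, then w(M*) ≤ 2α·w(M), where M* is a maximum weight matching of G. -/
/-- `M` is a matching in `G`: a set of edges of `G`, no two of which share a vertex. -/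
def IsMatchingIn {V : Type*} (G : SimpleGraph V) (M : Finset (Sym2 V)) : Prop :=
  (↑M ⊆ G.edgeSet) ∧ ∀ e ∈ M, ∀ f ∈ M, e ≠ f → ∀ v : V, v ∈ e → v ∉ f

/-- `M` is a maximal matching in `G`: no edge of `G` can be added keeping it a matching. -/
def IsMaximalMatchingIn {V : Type*} [DecidableEq V] (G : SimpleGraph V) (M : Finset (Sym2 V)) : Prop :=
  IsMatchingIn G M ∧ ∀ e ∈ G.edgeSet, e ∉ M → ¬ IsMatchingIn G (insert e M)

theorem stmt_3 {V : Type*} [Fintype V] [DecidableEq V] (G : SimpleGraph V)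
    (w : Sym2 V → ℝ) (α : ℝ) (hα : 1 < α) (i : ℤ)
    (hw : ∀ e ∈ G.edgeSet, α ^ i ≤ w e ∧ w e < α ^ (i + 1))
    (M Mstar : Finset (Sym2 V))
    (hM : IsMaximalMatchingIn G M)
    (hMstar : IsMatchingIn G Mstar)
    (hmax : ∀ N : Finset (Sym2 V), IsMatchingIn G N → ∑ e ∈ N, w e ≤ ∑ e ∈ Mstar, w e) :
    ∑ e ∈ Mstar, w e ≤ 2 * α * ∑ e ∈ M, w e := by
  classical
  have hαpos : (0:ℝ) < α := lt_trans one_pos hα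
  -- Every edge of Mstar shares a vertex with some edge of M.
  have key : ∀ e ∈ Mstar, ∃ f ∈ M, ∃ v : V, v ∈ e ∧ v ∈ f := by
    intro e he
    have heE : e ∈ G.edgeSet := hMstar.1 he
    by_cases hem : e ∈ M
    · exact ⟨e, hem, e.out.1, Sym2.out_fst_mem e, Sym2.out_fst_mem e⟩
    · have hnot := hM.2 e heE hem
      by_contra hcon
      push_neg at hcon
      apply hnot
      constructor
      · intro x hx
        simp only [Finset.coe_insert, Set.mem_insert_iff] at hx
        rcases hx with rfl | hx
        · exact heE
        · exact hM.1.1 hx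
      · intro a ha b hb hab v hva hvb
        simp only [Finset.mem_insert] at ha hb
        rcases ha with rfl | ha
        · rcases hb with rfl | hb
          · exact hab rfl
          · exact hcon b hb v hva hvb
        · rcases hb with rfl | hb
          · exact hcon a ha v hvb hva
          · exact hM.1.2 a ha b hb hab v hva hvb
  -- Cardinality bound: |Mstar| ≤ 2 |M|.
  have hcard : Mstar.card ≤ 2 * M.card := by
    have hsub : Mstar ⊆ M.biUnion (fun f => Mstar.filter (fun e => ∃ v : V, v ∈ e ∧ v ∈ f)) := by
      intro e he
      obtain ⟨f, hf, v, hve, hvf⟩ := key e he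
      exact Finset.mem_biUnion.2 ⟨f, hf, Finset.mem_filter.2 ⟨he, v, hve, hvf⟩⟩
    calc Mstar.card ≤ (M.biUnion (fun f => Mstar.filter (fun e => ∃ v : V, v ∈ e ∧ v ∈ f))).card :=
          Finset.card_le_card hsub
      _ ≤ ∑ f ∈ M, (Mstar.filter (fun e => ∃ v : V, v ∈ e ∧ v ∈ f)).card :=
          Finset.card_biUnion_le
      _ ≤ ∑ _f ∈ M, 2 := by
          apply Finset.sum_le_sum
          intro f _
          induction f using Sym2.ind with
          | _ u v =>
            have hone : ∀ x : V, (Mstar.filter (fun e => x ∈ e)).card ≤ 1 := by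
              intro x
              apply Finset.card_le_one.2
              intro a ha b hb
              simp only [Finset.mem_filter] at ha hb
              by_contra hab
              exact hMstar.2 a ha.1 b hb.1 hab x ha.2 hb.2
            have hsub2 : Mstar.filter (fun e => ∃ x : V, x ∈ e ∧ x ∈ s(u, v)) ⊆
                Mstar.filter (fun e => u ∈ e) ∪ Mstar.filter (fun e => v ∈ e) := by
              intro e he
              simp only [Finset.mem_filter, Sym2.mem_iff] at he
              obtain ⟨he1, x, hxe, hx⟩ := he
              rcases hx with rfl | rfl
              · exact Finset.mem_union_left _ (Finset.mem_filter.2 ⟨he1, hxe⟩)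
              · exact Finset.mem_union_right _ (Finset.mem_filter.2 ⟨he1, hxe⟩)
            calc (Mstar.filter (fun e => ∃ x : V, x ∈ e ∧ x ∈ s(u, v))).card
                ≤ (Mstar.filter (fun e => u ∈ e) ∪ Mstar.filter (fun e => v ∈ e)).card :=
                  Finset.card_le_card hsub2
              _ ≤ (Mstar.filter (fun e => u ∈ e)).card + (Mstar.filter (fun e => v ∈ e)).card :=
                  Finset.card_union_le _ _
              _ ≤ 2 := by have := hone u; have := hone v; omega
      _ = 2 * M.card := by rw [Finset.sum_const, smul_eq_mul, mul_comm]
  -- Weight bounds.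
  have h1 : ∑ e ∈ Mstar, w e ≤ (Mstar.card : ℝ) * α ^ (i + 1) := by
    have := Finset.sum_le_card_nsmul Mstar w (α ^ (i + 1))
      (fun e he => le_of_lt (hw e (hMstar.1 he)).2)
    simpa [nsmul_eq_mul] using this
  have h2 : (M.card : ℝ) * α ^ i ≤ ∑ e ∈ M, w e := by
    have := Finset.card_nsmul_le_sum M w (α ^ i) (fun e he => (hw e (hM.1.1 he)).1)
    simpa [nsmul_eq_mul] using this
  have hz : α ^ (i + 1) = α * α ^ i := by
    rw [zpow_add_one₀ (ne_of_gt hαpos)]; ring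
  calc ∑ e ∈ Mstar, w e ≤ (Mstar.card : ℝ) * α ^ (i + 1) := h1
    _ ≤ (2 * M.card : ℝ) * α ^ (i + 1) := by
        apply mul_le_mul_of_nonneg_right _ (le_of_lt (zpow_pos hαpos _))
        exact_mod_cast hcard
    _ = 2 * α * ((M.card : ℝ) * α ^ i) := by rw [hz]; ring
    _ ≤ 2 * α * ∑ e ∈ M, w e := by
        apply mul_le_mul_of_nonneg_left h2
        positivity
end

section
/- The function h(α) = 2α²·ln(α)/(α−1)² on (1, ∞) has a critical point α₀ satisfying (α₀ − 1) = 2·ln(α₀), i.e., h'(α₀) = 0, with α₀ ∈ (3.51, 3.52), and h(α₀) < 4.92. -/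
lemma exp_quarter_upper : Real.exp 0.255 < 1.29047 := by
  have h := Real.exp_bound' (x := 0.255) (by norm_num) (by norm_num) (n := 5) (by norm_num)
  have : (∑ m ∈ Finset.range 5, (0.255:ℝ) ^ m / m.factorial) +
      (0.255:ℝ) ^ 5 * (5 + 1) / (Nat.factorial 5 * 5) < 1.29047 := by
    simp [Finset.sum_range_succ, Nat.factorial]
    norm_num
  linarith

lemma exp_lower : (1.29691:ℝ) < Real.exp 0.26 := by
  have h := Real.sum_le_exp_of_nonneg (x := 0.26) (by norm_num) 5
  have : (1.29691:ℝ) < ∑ m ∈ Finset.range 5, (0.26:ℝ) ^ m / m.factorial := by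
    simp [Finset.sum_range_succ, Nat.factorial]
    norm_num
  linarith

lemma log_351 : 1.255 < Real.log 3.51 := by
  rw [show (1.255:ℝ) = 1 + 0.255 by norm_num, Real.lt_log_iff_exp_lt (by norm_num),
    Real.exp_add]
  have h1 := Real.exp_one_lt_d9
  have h2 := exp_quarter_upper
  nlinarith [Real.exp_pos 0.255, Real.exp_pos 1]

lemma log_352 : Real.log 3.52 < 1.26 := by
  rw [show (1.26:ℝ) = 1 + 0.26 by norm_num, Real.log_lt_iff_lt_exp (by norm_num), Real.exp_add]
  have h1 := Real.exp_one_gt_d9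
  have h2 := exp_lower
  nlinarith [Real.exp_pos 0.26, Real.exp_pos 1]

theorem stmt_11 (h : ℝ → ℝ)
    (hh : ∀ α : ℝ, 1 < α → h α = 2 * α ^ 2 * Real.log α / (α - 1) ^ 2) :
    ∃ α₀ : ℝ, 3.51 < α₀ ∧ α₀ < 3.52 ∧ α₀ - 1 = 2 * Real.log α₀ ∧
      deriv h α₀ = 0 ∧ h α₀ < 4.92 := by
  -- find the critical point by IVT
  set f : ℝ → ℝ := fun x => x - 1 - 2 * Real.log x with hf
  have hcont : ContinuousOn f (Set.Icc 3.51 3.52) := by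
    apply ContinuousOn.sub
    · fun_prop
    · apply ContinuousOn.mul continuousOn_const
      apply Real.continuousOn_log.mono
      intro x hx
      simp only [Set.mem_Icc] at hx
      simp; nlinarith [hx.1]
  have hivt := intermediate_value_Ioo (a := (3.51:ℝ)) (b := 3.52) (by norm_num) hcont
  have h0 : (0:ℝ) ∈ Set.Ioo (f 3.51) (f 3.52) := by
    constructor
    · show (3.51:ℝ) - 1 - 2 * Real.log 3.51 < 0
      have := log_351; linarith
    · show (0:ℝ) < 3.52 - 1 - 2 * Real.log 3.52
      have := log_352; linarith
  obtain ⟨α₀, hmem, hfα⟩ := hivt h0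
  obtain ⟨h1, h2⟩ := hmem
  have hlog : α₀ - 1 = 2 * Real.log α₀ := by
    have : α₀ - 1 - 2 * Real.log α₀ = 0 := hfα
    linarith
  have hα1 : (1:ℝ) < α₀ := by linarith
  have hαne : α₀ ≠ 0 := by positivity
  have hsub : α₀ - 1 ≠ 0 := by linarith
  refine ⟨α₀, h1, h2, hlog, ?_, ?_⟩
  · -- derivative is zero
    have heq : h =ᶠ[nhds α₀] fun α => 2 * α ^ 2 * Real.log α / (α - 1) ^ 2 := by
      filter_upwards [IsOpen.mem_nhds isOpen_Ioi (show α₀ ∈ Set.Ioi (1:ℝ) from hα1)] with x hx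
      exact hh x hx
    rw [heq.deriv_eq]
    have hn : HasDerivAt (fun α : ℝ => 2 * α ^ 2 * Real.log α)
        (2 * (2 * α₀ ^ 1) * Real.log α₀ + 2 * α₀ ^ 2 * α₀⁻¹) α₀ := by
      exact ((hasDerivAt_pow 2 α₀).const_mul 2).mul (Real.hasDerivAt_log hαne)
    have hd : HasDerivAt (fun α : ℝ => (α - 1) ^ 2) (2 * (α₀ - 1) ^ 1 * 1) α₀ := by
      exact ((hasDerivAt_id α₀).sub_const 1).pow 2
    have hdiv : HasDerivAt (fun α : ℝ => 2 * α ^ 2 * Real.log α / (α - 1) ^ 2) _ α₀ :=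
      hn.div hd (pow_ne_zero 2 hsub)
    rw [hdiv.deriv]
    have hlog' : Real.log α₀ = (α₀ - 1) / 2 := by linarith
    rw [hlog']
    field_simp
    ring
  · -- value bound
    rw [hh α₀ hα1]
    have hlog' : Real.log α₀ = (α₀ - 1) / 2 := by linarith
    rw [hlog']
    rw [div_lt_iff₀ (by positivity)]
    nlinarith
end

section
/- For α > 1, the function h(α) = 2α²·ln(α)/(α−1)² satisfies h(α) < 8 for α = 3.512; in particular the randomized-rounding ratio at α = 3.512 is strictly better than the deterministic ratio 8 obtained from f(α) = 2α/(α−1) + 2α at α = 2. -/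
theorem stmt_12 (h f : ℝ → ℝ)
    (hh : ∀ α : ℝ, 1 < α → h α = 2 * α ^ 2 * Real.log α / (α - 1) ^ 2)
    (hf : ∀ α : ℝ, 1 < α → f α = 2 * α / (α - 1) + 2 * α) :
    h 3.512 < 8 ∧ f 2 = 8 ∧ h 3.512 < f 2 := by
  have hlog : Real.log 3.512 < 1.75 := by
    have h1 : Real.log 3.512 < Real.log ((1.875 : ℝ) ^ 2) := by
      apply Real.log_lt_log (by norm_num)
      norm_num
    have h2 : Real.log ((1.875 : ℝ) ^ 2) = 2 * Real.log 1.875 := by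
      rw [Real.log_pow]; push_cast; ring
    have h3 : Real.log (1.875 : ℝ) ≤ 0.875 := by
      have := Real.log_le_sub_one_of_pos (x := (1.875 : ℝ)) (by norm_num)
      linarith
    linarith
  have hlogpos : 0 < Real.log 3.512 := Real.log_pos (by norm_num)
  have hval : h 3.512 = 2 * (3.512 : ℝ) ^ 2 * Real.log 3.512 / ((3.512 : ℝ) - 1) ^ 2 :=
    hh 3.512 (by norm_num)
  have hlt : h 3.512 < 8 := by
    rw [hval]
    rw [div_lt_iff₀ (by norm_num)]
    nlinarith
  have hf2 : f 2 = 8 := by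
    rw [hf 2 (by norm_num)]; norm_num
  exact ⟨hlt, hf2, by rw [hf2]; exact hlt⟩
end
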